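/- Let (μ, μ°) be a global solution of the quasistatic Eulerian strut equations with precompact trajectory in L²(0,1) × ℝ, and suppose t_n → ∞ with (μ(·,t_n), μ°(t_n)) → (ν₀, ν₀°). Then for every T > 0, the Liapunov function satisfies V(S(t)(ν₀, ν₀°)) = lim_{n→∞} V(μ(·, t_n + t), μ°(t_n + t)) = lim_{t→∞} V(μ(·,t), μ°(t)) for all t ∈ [0,T], where S(t) is the solution semiflow; consequently V is constant along the trajectory of (ν₀, ν₀°), and (ν₀, ν₀°) is an equilibrium point. In particular, the ω-limit set ω(μ₀, μ₀°) is a nonempty set of equilibrium points. -/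

import Mathlib

open Set Filter

/-- for a continuous semiflow `S` with continuous Liapunov function `V`
(nonincreasing along orbits and strict in the sense that orbits along which `V` is
constant are stationary), a precompact trajectory has the property that along any
sequence `tₙ → ∞` with `S(tₙ)x₀ → ν₀`, the Liapunov function converges to `V(ν₀)`,
`V` is constant along the orbit of `ν₀`, `ν₀` is an equilibrium, and the ω-limit set
of `x₀` is a nonempty set of equilibrium points. -/
theorem stmt_16 {X : Type*} [NormedAddCommGroup X]
    (S : ℝ → X → X) (hS0 : ∀ x, S 0 x = x)
    (hSadd : ∀ t u : ℝ, 0 ≤ t → 0 ≤ u → ∀ x, S (t + u) x = S t (S u x))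
    (hScont : ContinuousOn (fun p : ℝ × X => S p.1 p.2) (Ici 0 ×ˢ univ))
    (V : X → ℝ) (hVcont : Continuous V)
    (hVmono : ∀ x, ∀ t u : ℝ, 0 ≤ t → t ≤ u → V (S u x) ≤ V (S t x))
    (hVstrict : ∀ y, (∀ t ≥ (0:ℝ), V (S t y) = V y) → ∀ t ≥ (0:ℝ), S t y = y)
    (x₀ : X) (hcpt : IsCompact (closure {y | ∃ t ≥ (0:ℝ), y = S t x₀}))
    (tn : ℕ → ℝ) (htn0 : ∀ k, 0 ≤ tn k) (htn : Tendsto tn atTop atTop)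
    (ν₀ : X) (hconv : Tendsto (fun k => S (tn k) x₀) atTop (nhds ν₀)) :
    (∀ t ≥ (0:ℝ),
      Tendsto (fun k => V (S (tn k + t) x₀)) atTop (nhds (V (S t ν₀))) ∧
      V (S t ν₀) = V ν₀) ∧
    Tendsto (fun t => V (S t x₀)) atTop (nhds (V ν₀)) ∧
    (∀ t ≥ (0:ℝ), S t ν₀ = ν₀) ∧
    {y | ∃ u : ℕ → ℝ, (∀ k, 0 ≤ u k) ∧ Tendsto u atTop atTop ∧
      Tendsto (fun k => S (u k) x₀) atTop (nhds y)}.Nonempty ∧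
    (∀ y ∈ {y | ∃ u : ℕ → ℝ, (∀ k, 0 ≤ u k) ∧ Tendsto u atTop atTop ∧
      Tendsto (fun k => S (u k) x₀) atTop (nhds y)}, ∀ t ≥ (0:ℝ), S t y = y) := by
  have hfmono : ∀ t u : ℝ, 0 ≤ t → t ≤ u → V (S u x₀) ≤ V (S t x₀) :=
    fun t u ht htu => hVmono x₀ t u ht htu
  have hVtn : Tendsto (fun k => V (S (tn k) x₀)) atTop (nhds (V ν₀)) :=
    (hVcont.tendsto ν₀).comp hconv
  -- lower bound along the trajectory
  have hlb : ∀ t : ℝ, 0 ≤ t → V ν₀ ≤ V (S t x₀) := by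
    intro t ht
    refine le_of_tendsto hVtn ?_
    filter_upwards [htn.eventually_ge_atTop t] with k hk
    exact hfmono t (tn k) ht hk
  -- convergence of V along the whole trajectory
  have hB : Tendsto (fun t => V (S t x₀)) atTop (nhds (V ν₀)) := by
    rw [tendsto_order]
    constructor
    · intro a ha
      filter_upwards [eventually_ge_atTop (0:ℝ)] with t ht
      exact lt_of_lt_of_le ha (hlb t ht)
    · intro a ha
      obtain ⟨k, hk⟩ := (hVtn.eventually_lt_const ha).exists
      filter_upwards [eventually_ge_atTop (tn k)] with t ht
      exact lt_of_le_of_lt (hfmono (tn k) t (htn0 k) ht) hk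
  -- key lemma for any omega-limit point
  have key : ∀ (u : ℕ → ℝ) (y : X), (∀ k, 0 ≤ u k) → Tendsto u atTop atTop →
      Tendsto (fun k => S (u k) x₀) atTop (nhds y) →
      ∀ t : ℝ, 0 ≤ t →
        Tendsto (fun k => V (S (u k + t) x₀)) atTop (nhds (V (S t y))) ∧
        V (S t y) = V ν₀ := by
    intro u y hu0 huT huc t ht
    have h1 : Tendsto (fun k => S t (S (u k) x₀)) atTop (nhds (S t y)) := by
      have hmem : ((t, y) : ℝ × X) ∈ (Ici (0:ℝ)) ×ˢ (univ : Set X) := ⟨ht, mem_univ _⟩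
      have hc := (hScont (t, y) hmem)
      have hseq : Tendsto (fun k => ((t, S (u k) x₀) : ℝ × X)) atTop (nhds (t, y)) :=
        tendsto_const_nhds.prodMk_nhds huc
      have hin : ∀ k, ((t, S (u k) x₀) : ℝ × X) ∈ (Ici (0:ℝ)) ×ˢ (univ : Set X) :=
        fun k => ⟨ht, mem_univ _⟩
      exact hc.tendsto.comp
        (tendsto_nhdsWithin_of_tendsto_nhds_of_eventually_within _ hseq
          (Eventually.of_forall hin))
    have heq : ∀ k, S (u k + t) x₀ = S t (S (u k) x₀) := by
      intro k
      rw [add_comm]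
      exact hSadd t (u k) ht (hu0 k) x₀
    have h2 : Tendsto (fun k => V (S (u k + t) x₀)) atTop (nhds (V (S t y))) := by
      have := (hVcont.tendsto _).comp h1
      simpa [Function.comp_def, heq] using this
    have h3 : Tendsto (fun k => V (S (u k + t) x₀)) atTop (nhds (V ν₀)) :=
      hB.comp (tendsto_atTop_add_const_right atTop t huT)
    exact ⟨h2, tendsto_nhds_unique h2 h3⟩
  -- V constant along orbit of any omega-limit point, hence equilibrium
  have heqm : ∀ (u : ℕ → ℝ) (y : X), (∀ k, 0 ≤ u k) → Tendsto u atTop atTop →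
      Tendsto (fun k => S (u k) x₀) atTop (nhds y) → ∀ t ≥ (0:ℝ), S t y = y := by
    intro u y hu0 huT huc
    have hy0 : V y = V ν₀ := by
      have := (key u y hu0 huT huc 0 le_rfl).2
      rwa [hS0] at this
    refine hVstrict y ?_
    intro t ht
    rw [(key u y hu0 huT huc t ht).2, hy0]
  have hν : ∀ t ≥ (0:ℝ), S t ν₀ = ν₀ := heqm tn ν₀ htn0 htn hconv
  refine ⟨fun t ht => ⟨(key tn ν₀ htn0 htn hconv t ht).1,
      (key tn ν₀ htn0 htn hconv t ht).2⟩, hB, hν,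
    ⟨ν₀, tn, htn0, htn, hconv⟩, ?_⟩
  rintro y ⟨u, hu0, huT, huc⟩ t ht
  exact heqm u y hu0 huT huc t ht
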